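/- arXiv:1604.00622 — 2 statements merged into one kernel-verified Lean document; each statement's English description precedes it below -/
import Mathlib

section
/- For all nonnegative integers l and m, C_m^{(-l-1)} = C_l^{(-m-1)}, where C_n^{(k)} are the poly-Bernoulli numbers of C-type. -/
open PowerSeries Finset

/-- Unsigned Stirling numbers of the first kind. -/
def stirling1 : ℕ → ℕ → ℕ
  | 0, 0 => 1
  | 0, _ + 1 => 0
  | _ + 1, 0 => 0
  | n + 1, m + 1 => stirling1 n m + n * stirling1 n (m + 1)

/-- Stirling numbers of the second kind. -/
def stirling2 : ℕ → ℕ → ℕ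
  | 0, 0 => 1
  | 0, _ + 1 => 0
  | _ + 1, 0 => 0
  | n + 1, m + 1 => stirling2 n m + (m + 1) * stirling2 n (m + 1)

/-- e^t as a formal power series over ℚ. -/
noncomputable def expQ : PowerSeries ℚ := PowerSeries.exp ℚ

/-- e^{-t} as a formal power series over ℚ. -/
noncomputable def expNegQ : PowerSeries ℚ := rescale (-1) expQ

/-- The formal power series Li_k(1-e^{-t})/(1-e^{-t}) = ∑_{m≥0} (m+1)^{-k} (1-e^{-t})^m,
  defined coefficientwise (the tail vanishes since (1-e^{-t})^m has order m). -/
noncomputable def liEGF (k : ℤ) : PowerSeries ℚ :=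
  PowerSeries.mk fun j =>
    ∑ m ∈ range (j + 1), ((m : ℚ) + 1) ^ (-k) * coeff j ((1 - expNegQ) ^ m)

/-- EGF of the poly-Bernoulli polynomials: e^{-xt} Li_k(1-e^{-t})/(1-e^{-t}). -/
noncomputable def pbEGF (k : ℤ) (x : ℚ) : PowerSeries ℚ := rescale (-x) expQ * liEGF k

/-- Poly-Bernoulli polynomial value B_m^{(k)}(x). -/
noncomputable def pbPoly (k : ℤ) (x : ℚ) (m : ℕ) : ℚ := m.factorial * coeff m (pbEGF k x)

/-- Poly-Bernoulli number B_m^{(k)}. -/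
noncomputable def pbB (k : ℤ) (m : ℕ) : ℚ := pbPoly k 0 m

/-- Poly-Bernoulli number C_m^{(k)}. -/
noncomputable def pbC (k : ℤ) (m : ℕ) : ℚ := pbPoly k 1 m

/-- 𝓑_m^{(-l)}(n) = ∑_{j=0}^n [n j] B_m^{(-l-j)}(n). -/
noncomputable def scrB (l m n : ℕ) : ℚ :=
  ∑ j ∈ range (n + 1), (stirling1 n j : ℚ) * pbPoly (-(l : ℤ) - j) n m

/-! ### Auxiliary lemmas -/

lemma stirling2_eq_zero : ∀ {n k : ℕ}, n < k → stirling2 n k = 0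
  | 0, k + 1, _ => rfl
  | n + 1, k + 1, h => by
    have h1 : n < k := by omega
    have h2 : n < k + 1 := by omega
    simp [stirling2, stirling2_eq_zero h1, stirling2_eq_zero h2]

lemma coeff_expNegQ (n : ℕ) : coeff n expNegQ = (-1)^n / n.factorial := by
  simp [expNegQ, expQ, coeff_rescale, coeff_exp, mul_comm, div_eq_inv_mul]

lemma deriv_f : d⁄dX ℚ (1 - expNegQ) = expNegQ := by
  ext n
  rw [coeff_derivative]
  simp [coeff_expNegQ, pow_succ, Nat.factorial_succ]
  field_simp

lemma coeff_f_pow : ∀ (n i : ℕ),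
    (n.factorial : ℚ) * coeff n ((1 - expNegQ)^i) = (-1)^(n+i) * i.factorial * stirling2 n i := by
  intro n
  induction n with
  | zero =>
    intro i
    cases i with
    | zero => simp [stirling2]
    | succ i =>
      have h0 : constantCoeff (1 - expNegQ) = 0 := by
        have := coeff_expNegQ 0
        simp only [coeff_zero_eq_constantCoeff] at this
        simp [this]
      rw [coeff_zero_eq_constantCoeff, map_pow, h0]
      simp [stirling2_eq_zero (Nat.succ_pos i)]
  | succ n ih =>
    intro i
    cases i with
    | zero => simp [show stirling2 (n+1) 0 = 0 from rfl]
    | succ i =>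
      have hd : d⁄dX ℚ ((1 - expNegQ)^(i+1))
          = ((i:ℚ)+1) • ((1 - expNegQ)^i - (1 - expNegQ)^(i+1)) := by
        rw [Derivation.leibniz_pow, deriv_f, smul_eq_C_mul, nsmul_eq_mul, smul_eq_mul,
          show ((i:ℚ)+1) = ((i+1:ℕ):ℚ) by push_cast; ring, map_natCast]
        simp only [Nat.add_sub_cancel]
        ring
      have hc := congrArg (coeff n) hd
      rw [coeff_derivative, map_smul, map_sub, smul_eq_mul] at hc
      have e1 := ih i
      have e2 := ih (i+1)
      calc ((n+1).factorial : ℚ) * coeff (n+1) ((1 - expNegQ)^(i+1))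
          = (n.factorial : ℚ) * (coeff (n+1) ((1 - expNegQ)^(i+1)) * ((n:ℚ)+1)) := by
            rw [Nat.factorial_succ]; push_cast; ring
        _ = (n.factorial : ℚ) * (((i:ℚ)+1) * (coeff n ((1 - expNegQ)^i) - coeff n ((1 - expNegQ)^(i+1)))) := by
            rw [hc]
        _ = ((i:ℚ)+1) * (((n.factorial : ℚ) * coeff n ((1 - expNegQ)^i)) - ((n.factorial : ℚ) * coeff n ((1 - expNegQ)^(i+1)))) := by
            ring
        _ = ((i:ℚ)+1) * ((-1)^(n+i) * i.factorial * stirling2 n i - (-1)^(n+(i+1)) * (i+1).factorial * stirling2 n (i+1)) := by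
            rw [e1, e2]
        _ = (-1)^(n+1+(i+1)) * ((i+1).factorial : ℚ) * stirling2 (n+1) (i+1) := by
            rw [show stirling2 (n+1) (i+1) = stirling2 n i + (i+1) * stirling2 n (i+1) from rfl]
            rw [Nat.factorial_succ]
            push_cast
            ring

lemma coeff_f_pow_zero {n i : ℕ} (h : n < i) : coeff n ((1 - expNegQ)^i) = 0 := by
  have := coeff_f_pow n i
  rw [stirling2_eq_zero h] at this
  have hn : (n.factorial : ℚ) ≠ 0 := by positivity
  simpa [hn] using this

lemma fact_coeff_exp_mul (m i : ℕ) :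
    (m.factorial : ℚ) * coeff m (expNegQ * (1 - expNegQ)^i)
      = (-1)^(m+i) * i.factorial * stirling2 (m+1) (i+1) := by
  have h : expNegQ * (1 - expNegQ)^i = (1 - expNegQ)^i - (1 - expNegQ)^(i+1) := by ring
  rw [h, map_sub, mul_sub, coeff_f_pow, coeff_f_pow,
    show stirling2 (m+1) (i+1) = stirling2 m i + (i+1) * stirling2 m (i+1) from rfl,
    Nat.factorial_succ]
  push_cast
  ring

lemma pbC_eq (k : ℤ) (m : ℕ) :
    pbC k m = ∑ i ∈ range (m+1),
      ((i:ℚ)+1)^(-k) * ((-1)^(m+i) * i.factorial * stirling2 (m+1) (i+1)) := by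
  have hres : rescale (-(1:ℚ)) expQ = expNegQ := by norm_num [expNegQ]
  have h1 : ∀ b ≤ m, coeff b (liEGF k)
      = ∑ i ∈ range (m+1), ((i:ℚ)+1)^(-k) * coeff b ((1 - expNegQ)^i) := by
    intro b hb
    rw [liEGF, coeff_mk]
    apply Finset.sum_subset
    · intro x hx
      simp only [mem_range] at *
      omega
    · intro i hi hni
      simp only [mem_range] at hni
      rw [coeff_f_pow_zero (by omega), mul_zero]
  have h2 : coeff m (expNegQ * liEGF k)
      = ∑ i ∈ range (m+1), ((i:ℚ)+1)^(-k) * coeff m (expNegQ * (1 - expNegQ)^i) := by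
    rw [coeff_mul]
    have : ∀ p ∈ antidiagonal m, coeff p.1 expNegQ * coeff p.2 (liEGF k)
        = ∑ i ∈ range (m+1), ((i:ℚ)+1)^(-k) * (coeff p.1 expNegQ * coeff p.2 ((1 - expNegQ)^i)) := by
      intro p hp
      rw [h1 p.2 (Finset.HasAntidiagonal.antidiagonal.snd_le hp), Finset.mul_sum]
      apply Finset.sum_congr rfl
      intro i _
      ring
    rw [Finset.sum_congr rfl this, Finset.sum_comm]
    apply Finset.sum_congr rfl
    intro i _
    rw [coeff_mul, Finset.mul_sum]
  rw [pbC, pbPoly, pbEGF, hres, h2, Finset.mul_sum]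
  apply Finset.sum_congr rfl
  intro i _
  rw [← fact_coeff_exp_mul]
  ring

lemma choose_mul_id (x r : ℕ) : x * x.choose r = (r+1) * x.choose (r+1) + r * x.choose r := by
  rcases le_or_gt r x with h | h
  · have hc := Nat.choose_succ_right_eq x r
    calc x * x.choose r = ((x-r)+r) * x.choose r := by rw [Nat.sub_add_cancel h]
      _ = (x-r) * x.choose r + r * x.choose r := add_mul _ _ _
      _ = (r+1) * x.choose (r+1) + r * x.choose r := by
          rw [mul_comm (x-r), ← hc, mul_comm]
  · simp [Nat.choose_eq_zero_of_lt h, Nat.choose_eq_zero_of_lt (by omega : x < r+1)]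

lemma pow_eq_sum_stirling2 (q x : ℕ) :
    x^q = ∑ r ∈ range (q+1), stirling2 q r * r.factorial * x.choose r := by
  induction q with
  | zero => simp [stirling2]
  | succ q ih =>
    have step : x^(q+1) = ∑ r ∈ range (q+1), stirling2 q r * r.factorial * (x * x.choose r) := by
      rw [pow_succ, ih, Finset.sum_mul]
      exact Finset.sum_congr rfl fun r _ => by ring
    have per : ∀ r, stirling2 q r * r.factorial * (x * x.choose r)
        = stirling2 q r * (r+1).factorial * x.choose (r+1)
          + r * (stirling2 q r * r.factorial * x.choose r) := by
      intro r
      rw [choose_mul_id x r, Nat.factorial_succ]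
      ring
    rw [step, Finset.sum_congr rfl fun r _ => per r, Finset.sum_add_distrib]
    have h2 : ∑ r ∈ range (q+1), r * (stirling2 q r * r.factorial * x.choose r)
        = ∑ r ∈ range (q+1), (r+1) * (stirling2 q (r+1) * (r+1).factorial * x.choose (r+1)) := by
      rw [Finset.sum_range_succ' _ q]
      simp only [Nat.zero_mul, add_zero]
      rw [Finset.sum_range_succ]
      simp [stirling2_eq_zero (Nat.lt_succ_self q)]
    rw [h2, Finset.sum_range_succ' _ (q+1)]
    have h0 : stirling2 (q+1) 0 * Nat.factorial 0 * x.choose 0 = 0 := by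
      simp [show stirling2 (q+1) 0 = 0 from rfl]
    rw [h0, add_zero, ← Finset.sum_add_distrib]
    refine Finset.sum_congr rfl fun r _ => ?_
    rw [show stirling2 (q+1) (r+1) = stirling2 q r + (r+1) * stirling2 q (r+1) from rfl]
    ring

lemma choose_CL (i j : ℕ) : (i+2) * (i+1).choose j = (i+1) * i.choose j + (j+1) * (i+1).choose j := by
  rcases le_or_gt j (i+1) with h | h
  · have h1 := Nat.add_one_mul_choose_eq i j
    have h2 := Nat.choose_succ_right_eq (i+1) j
    have h3 : (i+1) * i.choose j = (i+1).choose j * (i+1-j) := by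
      rw [show (i+1) * i.choose j = Nat.succ i * i.choose j from rfl, h1, ← h2]
    rw [h3]
    have h4 : (i+1-j) + (j+1) = i+2 := by omega
    calc (i+2) * (i+1).choose j = ((i+1-j)+(j+1)) * (i+1).choose j := by rw [h4]
      _ = (i+1).choose j * (i+1-j) + (j+1) * (i+1).choose j := by ring
  · simp [Nat.choose_eq_zero_of_lt h, Nat.choose_eq_zero_of_lt (by omega : i < j)]

lemma ptid (i j : ℕ) :
    (i.factorial : ℚ) * ((j+1).factorial * ((i+1).choose (j+1)))
      = j.factorial * (i.choose j) * (i+1).factorial := by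
  rcases le_or_gt j i with h | h
  · have q1 : ((i+1).choose (j+1) * (j+1).factorial * (i-j).factorial : ℚ) = (i+1).factorial := by
      have := Nat.choose_mul_factorial_mul_factorial (show j+1 ≤ i+1 by omega)
      rw [show i+1-(j+1) = i-j by omega] at this
      exact_mod_cast this
    have q2 : ((i.choose j) * j.factorial * (i-j).factorial : ℚ) = i.factorial := by
      exact_mod_cast Nat.choose_mul_factorial_mul_factorial h
    have hd : ((i-j).factorial : ℚ) ≠ 0 := by positivity
    apply mul_right_cancel₀ hd
    linear_combination (i.factorial : ℚ) * q1 - ((i+1).factorial : ℚ) * q2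
  · rw [Nat.choose_eq_zero_of_lt h, Nat.choose_eq_zero_of_lt (by omega : i+1 < j+1)]
    simp

lemma G_id : ∀ (m j : ℕ),
    ∑ i ∈ range (m+1), (-1:ℚ)^(m+i) * (i.choose j) * (i+1).factorial * stirling2 (m+1) (i+1)
      = (j+1).factorial * stirling2 (m+1) (j+1) := by
  intro m
  induction m with
  | zero =>
    intro j
    cases j with
    | zero => simp [stirling2]
    | succ j =>
      simp [stirling2_eq_zero (show 1 < j+2 by omega)]
  | succ m ih =>
    intro j
    have expand : ∀ i, ((stirling2 (m+2) (i+1) : ℚ))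
        = stirling2 (m+1) i + (i+1) * stirling2 (m+1) (i+1) := by
      intro i
      rw [show stirling2 (m+2) (i+1) = stirling2 (m+1) i + (i+1) * stirling2 (m+1) (i+1) from rfl]
      push_cast; ring
    have split : ∑ i ∈ range (m+2), (-1:ℚ)^(m+1+i) * (i.choose j) * (i+1).factorial * stirling2 (m+2) (i+1)
        = (∑ i ∈ range (m+2), (-1:ℚ)^(m+1+i) * (i.choose j) * (i+1).factorial * stirling2 (m+1) i)
        + (∑ i ∈ range (m+2), (-1:ℚ)^(m+1+i) * (i.choose j) * (i+1).factorial * ((i+1) * stirling2 (m+1) (i+1))) := by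
      rw [← Finset.sum_add_distrib]
      exact Finset.sum_congr rfl fun i _ => by rw [expand]; ring
    have hA : ∑ i ∈ range (m+2), (-1:ℚ)^(m+1+i) * (i.choose j) * (i+1).factorial * stirling2 (m+1) i
        = ∑ i ∈ range (m+1), (-1:ℚ)^(m+1+(i+1)) * ((i+1).choose j) * (i+2).factorial * stirling2 (m+1) (i+1) := by
      rw [Finset.sum_range_succ' _ (m+1)]
      simp [show stirling2 (m+1) 0 = 0 from rfl]
    have hB : ∑ i ∈ range (m+2), (-1:ℚ)^(m+1+i) * (i.choose j) * (i+1).factorial * ((i+1) * stirling2 (m+1) (i+1))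
        = ∑ i ∈ range (m+1), (-1:ℚ)^(m+1+i) * (i.choose j) * (i+1).factorial * ((i+1) * stirling2 (m+1) (i+1)) := by
      rw [Finset.sum_range_succ]
      simp [stirling2_eq_zero (Nat.lt_succ_self (m+1))]
    have combined : ∑ i ∈ range (m+2), (-1:ℚ)^(m+1+i) * (i.choose j) * (i+1).factorial * stirling2 (m+2) (i+1)
        = ((j:ℚ)+1) * ∑ i ∈ range (m+1), (-1:ℚ)^(m+i) * ((i+1).choose j) * (i+1).factorial * stirling2 (m+1) (i+1) := by
      rw [split, hA, hB, Finset.mul_sum, ← Finset.sum_add_distrib]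
      refine Finset.sum_congr rfl fun i _ => ?_
      have hCL : ((i+2) * (i+1).choose j : ℚ) = (i+1) * i.choose j + (j+1) * (i+1).choose j := by
        exact_mod_cast choose_CL i j
      rw [show (i+2).factorial = (i+2) * (i+1).factorial from rfl]
      push_cast
      linear_combination ((-1:ℚ)^(m+i) * (i+1).factorial * stirling2 (m+1) (i+1)) * hCL
    rw [combined]
    cases j with
    | zero =>
      have : ∀ i ∈ range (m+1), (-1:ℚ)^(m+i) * ((i+1).choose 0) * (i+1).factorial * stirling2 (m+1) (i+1)
          = (-1:ℚ)^(m+i) * (i.choose 0) * (i+1).factorial * stirling2 (m+1) (i+1) := by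
        intro i _; simp
      rw [Finset.sum_congr rfl this, ih 0]
      rw [show stirling2 (m+2) 1 = stirling2 (m+1) 0 + 1 * stirling2 (m+1) 1 from rfl,
        show stirling2 (m+1) 0 = 0 from rfl]
      push_cast
      ring
    | succ j =>
      have : ∀ i ∈ range (m+1), (-1:ℚ)^(m+i) * ((i+1).choose (j+1)) * (i+1).factorial * stirling2 (m+1) (i+1)
          = (-1:ℚ)^(m+i) * (i.choose j) * (i+1).factorial * stirling2 (m+1) (i+1)
            + (-1:ℚ)^(m+i) * (i.choose (j+1)) * (i+1).factorial * stirling2 (m+1) (i+1) := by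
        intro i _
        rw [Nat.choose_succ_succ (i) (j)]
        push_cast
        ring
      rw [Finset.sum_congr rfl this, Finset.sum_add_distrib, ih j, ih (j+1)]
      rw [show stirling2 (m+2) (j+2) = stirling2 (m+1) (j+1) + (j+2) * stirling2 (m+1) (j+2) from rfl,
        Nat.factorial_succ (j+1)]
      push_cast
      ring

lemma pbC_symm_form (l m : ℕ) :
    pbC (-(l:ℤ)-1) m = ∑ j ∈ range (l+1),
      (j.factorial:ℚ) * (j+1).factorial * stirling2 (l+1) (j+1) * stirling2 (m+1) (j+1) := by
  have hw : ∀ i : ℕ, ((i:ℚ)+1)^(-(-(l:ℤ)-1))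
      = ∑ j ∈ range (l+1), (stirling2 (l+1) (j+1) : ℚ) * ((j+1).factorial * ((i+1).choose (j+1))) := by
    intro i
    rw [show (-(-(l:ℤ)-1)) = ((l+1:ℕ):ℤ) by push_cast; ring, zpow_natCast,
      show ((i:ℚ)+1) = ((i+1:ℕ):ℚ) by push_cast; ring, ← Nat.cast_pow,
      pow_eq_sum_stirling2 (l+1) (i+1), Nat.cast_sum, Finset.sum_range_succ' _ (l+1)]
    simp [show stirling2 (l+1) 0 = 0 from rfl, mul_assoc]
  rw [pbC_eq]
  calc ∑ i ∈ range (m+1), ((i:ℚ)+1)^(-(-(l:ℤ)-1)) * ((-1)^(m+i) * i.factorial * stirling2 (m+1) (i+1))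
      = ∑ i ∈ range (m+1), ∑ j ∈ range (l+1),
          (stirling2 (l+1) (j+1) : ℚ) * ((j+1).factorial * ((i+1).choose (j+1)))
            * ((-1)^(m+i) * i.factorial * stirling2 (m+1) (i+1)) := by
        refine Finset.sum_congr rfl fun i _ => ?_
        rw [hw i, Finset.sum_mul]
    _ = ∑ j ∈ range (l+1), ∑ i ∈ range (m+1),
          (stirling2 (l+1) (j+1) : ℚ) * ((j+1).factorial * ((i+1).choose (j+1)))
            * ((-1)^(m+i) * i.factorial * stirling2 (m+1) (i+1)) := Finset.sum_comm
    _ = ∑ j ∈ range (l+1), (stirling2 (l+1) (j+1) : ℚ) * j.factorial *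
          ∑ i ∈ range (m+1), (-1:ℚ)^(m+i) * (i.choose j) * (i+1).factorial * stirling2 (m+1) (i+1) := by
        refine Finset.sum_congr rfl fun j _ => ?_
        rw [Finset.mul_sum]
        refine Finset.sum_congr rfl fun i _ => ?_
        linear_combination ((stirling2 (l+1) (j+1) : ℚ) * (-1:ℚ)^(m+i) * stirling2 (m+1) (i+1)) * ptid i j
    _ = ∑ j ∈ range (l+1),
          (j.factorial:ℚ) * (j+1).factorial * stirling2 (l+1) (j+1) * stirling2 (m+1) (j+1) := by
        refine Finset.sum_congr rfl fun j _ => ?_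
        rw [G_id m j]
        ring

/-- Duality for C-type poly-Bernoulli numbers: C_m^{(-l-1)} = C_l^{(-m-1)}. -/
theorem polyBernoulliC_duality (l m : ℕ) : pbC (-(l : ℤ) - 1) m = pbC (-(m : ℤ) - 1) l := by
  have key : ∀ a b : ℕ, pbC (-(a:ℤ)-1) b = ∑ j ∈ range (max a b + 1),
      (j.factorial:ℚ) * (j+1).factorial * stirling2 (a+1) (j+1) * stirling2 (b+1) (j+1) := by
    intro a b
    rw [pbC_symm_form]
    apply Finset.sum_subset
    · intro x hx
      simp only [mem_range] at *
      omega
    · intro j hj hnj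
      simp only [mem_range] at hnj
      rw [stirling2_eq_zero (show a+1 < j+1 by omega)]
      simp
  rw [key l m, key m l, max_comm m l]
  refine Finset.sum_congr rfl fun j _ => ?_
  ring
end

section
/- For nonnegative integers m, n and any integer k, the poly-Bernoulli polynomial value B_m^{(k)}(n) equals \sum_{q=1}^{m+1} \sum_{i=0}^{n} (-1)^{m+n+q-i-1} ((q-1)!/q^k) [n choose_1 i] {m+i choose_2 n+q-1}. -/
open PowerSeries Finset

lemma stirling1_eq_zero : ∀ n i, n < i → stirling1 n i = 0
  | 0, 0, h => absurd h (lt_irrefl 0)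
  | 0, _+1, _ => rfl
  | n+1, 0, h => absurd h (by omega)
  | n+1, i+1, h => by
      have h1 : n < i := by omega
      have h2 : n < i+1 := by omega
      simp [stirling1, stirling1_eq_zero n i h1, stirling1_eq_zero n (i+1) h2]

lemma stirling1_poly (n : ℕ) (x : ℚ) :
    ∑ i ∈ range (n+1), (stirling1 n i : ℚ) * x^i = ∏ j ∈ range n, (x + j) := by
  induction n with
  | zero => simp [stirling1]
  | succ n ih =>
    set S := ∑ i ∈ range (n+1), (stirling1 n i : ℚ) * x^i with hS
    have shift : ∑ i ∈ range (n+1), (stirling1 n (i+1) : ℚ) * x^(i+1)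
        = S + (stirling1 n (n+1) : ℚ)*x^(n+1) - (stirling1 n 0 : ℚ)*x^0 := by
      have e1 := Finset.sum_range_succ' (fun i => (stirling1 n i : ℚ) * x ^ i) (n+1)
      have e2 := Finset.sum_range_succ (fun i => (stirling1 n i : ℚ) * x ^ i) (n+1)
      rw [hS]; linarith
    have hz : (n:ℚ) * (stirling1 n 0 : ℚ) = 0 := by
      cases n with
      | zero => simp
      | succ k => rw [show stirling1 (k+1) 0 = 0 from rfl]; simp
    have hrec : ∀ i, (stirling1 (n+1) (i+1) : ℚ)
        = (stirling1 n i : ℚ) + n * stirling1 n (i+1) := by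
      intro i; rw [show stirling1 (n+1) (i+1) = stirling1 n i + n * stirling1 n (i+1) from rfl]
      push_cast; ring
    have expand : ∑ i ∈ range (n+2), (stirling1 (n+1) i : ℚ) * x^i
        = ∑ i ∈ range (n+1), ((stirling1 n i : ℚ) * x^(i+1)
            + (n : ℚ) * ((stirling1 n (i+1) : ℚ) * x^(i+1)))
          + (stirling1 (n+1) 0 : ℚ) * x^0 := by
      rw [Finset.sum_range_succ']
      refine congrArg₂ _ (Finset.sum_congr rfl fun i _ => ?_) rfl
      rw [hrec]; ring
    rw [expand, Finset.sum_add_distrib, show stirling1 (n+1) 0 = 0 from rfl]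
    have first : ∑ i ∈ range (n+1), (stirling1 n i : ℚ) * x^(i+1) = x * S := by
      rw [hS, Finset.mul_sum]
      exact Finset.sum_congr rfl fun i _ => by ring
    have second : ∑ i ∈ range (n+1), (n : ℚ) * ((stirling1 n (i+1) : ℚ) * x^(i+1))
        = (n:ℚ) * S := by
      rw [← Finset.mul_sum, shift, stirling1_eq_zero n (n+1) (by omega)]
      push_cast
      linear_combination (-1:ℚ) * hz
    rw [first, second, ih, Finset.prod_range_succ]
    push_cast
    ring

noncomputable def Asum (r N : ℕ) : ℚ := ∑ j ∈ range (r+1), (-1:ℚ)^j * (r.choose j) * (j:ℚ)^N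

lemma Asum_succ (s N : ℕ) : Asum (s+1) N
    = (0:ℚ)^N - ∑ i ∈ range (s+1), (-1:ℚ)^i * (s.choose i) * ((i:ℚ)+1)^N
      - ∑ i ∈ range (s+1), (-1:ℚ)^i * (s.choose (i+1)) * ((i:ℚ)+1)^N := by
  rw [Asum, Finset.sum_range_succ']
  have : ∀ i, (-1:ℚ)^(i+1) * ((s+1).choose (i+1)) * ((i+1:ℕ):ℚ)^N
      = -((-1:ℚ)^i * (s.choose i) * ((i:ℚ)+1)^N) - ((-1:ℚ)^i * (s.choose (i+1)) * ((i:ℚ)+1)^N) := by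
    intro i
    rw [Nat.choose_succ_succ]
    push_cast
    ring
  rw [Finset.sum_congr rfl fun i _ => this i]
  rw [Finset.sum_sub_distrib, Finset.sum_neg_distrib]
  simp only [Nat.choose_zero_right, Nat.cast_zero, Nat.cast_one, pow_zero, one_mul]
  ring

lemma Asum_self (s N : ℕ) : Asum s N
    = (0:ℚ)^N + ∑ i ∈ range s, (-1:ℚ)^(i+1) * (s.choose (i+1)) * ((i:ℚ)+1)^N := by
  rw [Asum, Finset.sum_range_succ']
  push_cast
  rw [add_comm]
  norm_num

lemma Asum_sub (s N : ℕ) : Asum s N - Asum (s+1) N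
    = ∑ i ∈ range (s+1), (-1:ℚ)^i * (s.choose i) * ((i:ℚ)+1)^N := by
  rw [Asum_succ, Asum_self]
  have h1 : ∑ i ∈ range (s+1), (-1:ℚ)^i * (s.choose (i+1)) * ((i:ℚ)+1)^N
      = ∑ i ∈ range s, (-1:ℚ)^i * (s.choose (i+1)) * ((i:ℚ)+1)^N := by
    rw [Finset.sum_range_succ, Nat.choose_eq_zero_of_lt (by omega)]
    simp
  have h2 : ∑ i ∈ range s, (-1:ℚ)^(i+1) * (s.choose (i+1)) * ((i:ℚ)+1)^N
      = - ∑ i ∈ range s, (-1:ℚ)^i * (s.choose (i+1)) * ((i:ℚ)+1)^N := by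
    rw [← Finset.sum_neg_distrib]
    exact Finset.sum_congr rfl fun i _ => by ring
  rw [h1, h2]
  ring

lemma Asum_succN (s N : ℕ) : Asum (s+1) (N+1)
    = -((s:ℚ)+1) * ∑ i ∈ range (s+1), (-1:ℚ)^i * (s.choose i) * ((i:ℚ)+1)^N := by
  rw [Asum, Finset.sum_range_succ']
  simp only [Nat.cast_zero, zero_pow (Nat.succ_ne_zero N), mul_zero, add_zero]
  rw [Finset.mul_sum]
  refine Finset.sum_congr rfl fun i _ => ?_
  have hc : ((s+1) * (s.choose i) : ℕ) = ((s+1).choose (i+1)) * (i+1) :=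
    Nat.add_one_mul_choose_eq s i
  have hc' : ((s:ℚ)+1) * (s.choose i) = ((s+1).choose (i+1) : ℚ) * ((i:ℚ)+1) := by
    exact_mod_cast congrArg (Nat.cast : ℕ → ℚ) hc
  push_cast
  linear_combination ((-1:ℚ)^i * ((i:ℚ)+1)^N) * hc'

lemma stirling2_sum (N r : ℕ) :
    (stirling2 N r : ℚ) * r.factorial = (-1:ℚ)^r * Asum r N := by
  induction N generalizing r with
  | zero =>
    cases r with
    | zero => simp [stirling2, Asum]
    | succ s =>
      rw [show stirling2 0 (s+1) = 0 from rfl]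
      have : Asum (s+1) 0 = 0 := by
        rw [Asum]
        have := add_pow ((-1:ℚ)) 1 (s+1)
        simp only [one_pow, mul_one, pow_zero] at this ⊢
        rw [show ((-1:ℚ)+1) = 0 by ring] at this
        rw [zero_pow (Nat.succ_ne_zero s)] at this
        rw [← this]
      simp [this]
  | succ N ih =>
    cases r with
    | zero =>
      rw [show stirling2 (N+1) 0 = 0 from rfl, Asum]
      simp [zero_pow (Nat.succ_ne_zero N)]
    | succ s =>
      have key : stirling2 (N+1) (s+1) = stirling2 N s + (s+1) * stirling2 N (s+1) :=
        rfl
      have hfac : ((s+1).factorial : ℚ) = ((s:ℚ)+1) * (s.factorial : ℚ) := by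
        rw [Nat.factorial_succ]; push_cast; ring
      rw [key]
      push_cast
      rw [hfac]
      have e1 := ih s
      have e2 := ih (s+1)
      push_cast at e1 e2
      rw [hfac] at e2
      have e3 := Asum_succN s N
      have e4 := Asum_sub s N
      rw [e3, ← e4]
      linear_combination ((s:ℚ)+1) * e1 + ((s:ℚ)+1) * e2

lemma rescale_exp_mul (a b : ℚ) :
    rescale a expQ * rescale b expQ = rescale (a+b) expQ :=
  exp_mul_exp_eq_exp_add a b

lemma expNegQ_pow (r : ℕ) : expNegQ ^ r = rescale (-(r:ℚ)) expQ := by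
  rw [expNegQ, ← map_pow, expQ, exp_pow_eq_rescale_exp, rescale_rescale]
  norm_num

lemma coeff_rescale_exp (c : ℚ) (b : ℕ) :
    coeff b (rescale c expQ) = c^b / b.factorial := by
  rw [coeff_rescale, expQ, coeff_exp]
  simp [div_eq_mul_inv]

lemma rescale_mul_one_sub_pow (c : ℚ) (q : ℕ) :
    rescale c expQ * (1 - expNegQ)^q
      = ∑ r ∈ range (q+1), C ((-1:ℚ)^r * (q.choose r)) * rescale (c - r) expQ := by
  have h1 : (1 : PowerSeries ℚ) - expNegQ = -expNegQ + 1 := by ring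
  rw [h1, add_pow, Finset.mul_sum]
  refine Finset.sum_congr rfl fun r hr => ?_
  have hneg : (-expNegQ)^r = C ((-1:ℚ)^r) * rescale (-(r:ℚ)) expQ := by
    rw [neg_pow, expNegQ_pow]
    congr 1
    rw [map_pow, map_neg, map_one]
  have h2 : rescale c expQ * rescale (-(r:ℚ)) expQ = rescale (c - r) expQ := by
    rw [rescale_exp_mul]; norm_num [sub_eq_add_neg]
  have h3 : ((q.choose r : ℕ) : PowerSeries ℚ) = C ((q.choose r : ℚ)) := by
    rw [map_natCast]
  rw [hneg, one_pow, h3, ← h2, map_mul]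
  ring

lemma coeff_rescale_mul_pow (c : ℚ) (q b : ℕ) :
    coeff b (rescale c expQ * (1 - expNegQ)^q)
      = ∑ r ∈ range (q+1), (-1:ℚ)^r * (q.choose r) * (c - r)^b / b.factorial := by
  rw [rescale_mul_one_sub_pow, map_sum]
  refine Finset.sum_congr rfl fun r hr => ?_
  rw [coeff_C_mul, coeff_rescale_exp]
  ring

lemma coeff_one_sub_pow_eq_zero (b q : ℕ) (h : b < q) :
    coeff b ((1 - expNegQ)^q) = 0 := by
  have hc : constantCoeff (1 - expNegQ) = 0 := by
    rw [map_sub, map_one]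
    rw [← coeff_zero_eq_constantCoeff_apply, expNegQ, coeff_rescale, expQ, coeff_exp]
    simp
  have hdvd : (X : PowerSeries ℚ)^q ∣ (1 - expNegQ)^q :=
    pow_dvd_pow_of_dvd (PowerSeries.X_dvd_iff.mpr hc) q
  exact (PowerSeries.X_pow_dvd_iff.mp hdvd) b h

lemma coeff_mul_liEGF (c : ℚ) (k : ℤ) (m : ℕ) :
    coeff m (rescale c expQ * liEGF k)
      = ∑ q ∈ range (m+1), ((q:ℚ)+1)^(-k) * coeff m (rescale c expQ * (1 - expNegQ)^q) := by
  rw [coeff_mul]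
  have h1 : ∀ p ∈ antidiagonal m,
      coeff p.1 (rescale c expQ) * coeff p.2 (liEGF k)
        = ∑ q ∈ range (m+1), ((q:ℚ)+1)^(-k)
            * (coeff p.1 (rescale c expQ) * coeff p.2 ((1 - expNegQ)^q)) := by
    intro p hp
    have hp2 : p.2 ≤ m := by
      have := Finset.HasAntidiagonal.mem_antidiagonal.mp hp
      omega
    rw [liEGF, coeff_mk, Finset.mul_sum]
    rw [Finset.sum_subset (Finset.range_subset_range.mpr (by omega : p.2 + 1 ≤ m + 1))
      (fun q _ hq => by
        rw [coeff_one_sub_pow_eq_zero p.2 q (by simp only [Finset.mem_range] at hq ⊢; omega)]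
        ring)]
    exact Finset.sum_congr rfl fun q _ => by ring
  rw [Finset.sum_congr rfl h1, Finset.sum_comm]
  refine Finset.sum_congr rfl fun q _ => ?_
  rw [← Finset.mul_sum, coeff_mul]

lemma prodD : ∀ (n r : ℕ), ∏ s ∈ range n, (((n+r : ℕ) : ℚ) - s)
    = ((n+r).factorial : ℚ) / (r.factorial : ℚ)
  | 0, r => by
      simp [div_self (Nat.cast_ne_zero.mpr (Nat.factorial_ne_zero r) : (r.factorial:ℚ) ≠ 0)]
  | n+1, r => by
      rw [Finset.prod_range_succ, show n+1+r = n+(r+1) by omega, prodD n (r+1)]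
      have h1 : ((n+(r+1) : ℕ) : ℚ) - (n:ℚ) = (r:ℚ)+1 := by push_cast; ring
      rw [h1, Nat.factorial_succ]
      have h2 : ((r:ℚ)+1) ≠ 0 := by positivity
      have h3 : (r.factorial : ℚ) ≠ 0 := Nat.cast_ne_zero.mpr (Nat.factorial_ne_zero r)
      field_simp
      push_cast
      ring

lemma hsq (a : ℕ) : (-1:ℚ)^a * (-1)^a = 1 := by
  rw [← pow_add, ← two_mul, pow_mul]; norm_num

lemma claimB (m n q : ℕ) :
    ∑ i ∈ range (n+1), (-1:ℚ)^(m+n+q-i) * (q.factorial : ℚ)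
        * (stirling1 n i : ℚ) * (stirling2 (m+i) (n+q) : ℚ)
    = ∑ r ∈ range (q+1), (-1:ℚ)^(m+r) * (q.choose r : ℚ) * ((n:ℚ)+r)^m := by
  have hFnq : ((n+q).factorial : ℚ) ≠ 0 := Nat.cast_ne_zero.mpr (Nat.factorial_ne_zero _)
  have hst : ∀ i, (stirling2 (m+i) (n+q) : ℚ)
      = (-1:ℚ)^(n+q) * Asum (n+q) (m+i) / ((n+q).factorial : ℚ) := by
    intro i
    rw [eq_div_iff hFnq]
    linear_combination stirling2_sum (m+i) (n+q)
  have hpow : ∀ i, i ≤ n → (-1:ℚ)^(m+n+q-i) = (-1:ℚ)^(m+n+q) * (-1:ℚ)^i := by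
    intro i hi
    have h2 : m+n+q-i+i = m+n+q := by omega
    calc (-1:ℚ)^(m+n+q-i) = (-1:ℚ)^(m+n+q-i) * ((-1:ℚ)^i * (-1:ℚ)^i) := by rw [hsq]; ring
      _ = ((-1:ℚ)^(m+n+q-i) * (-1:ℚ)^i) * (-1:ℚ)^i := by ring
      _ = (-1:ℚ)^(m+n+q) * (-1:ℚ)^i := by rw [← pow_add, h2]
  set B : ℚ := (-1:ℚ)^(m+n+q) * (-1:ℚ)^(n+q) * (q.factorial:ℚ) / ((n+q).factorial:ℚ) with hB
  have inner : ∀ i ∈ range (n+1),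
      (-1:ℚ)^(m+n+q-i) * (q.factorial:ℚ) * (stirling1 n i:ℚ) * (stirling2 (m+i) (n+q):ℚ)
      = ∑ j ∈ range (n+q+1),
          B * ((-1:ℚ)^j * (((n+q).choose j : ℕ):ℚ) * (j:ℚ)^m)
            * ((stirling1 n i : ℚ) * (-(j:ℚ))^i) := by
    intro i hi
    have hAs : ∑ j ∈ range (n+q+1),
        B * ((-1:ℚ)^j * (((n+q).choose j : ℕ):ℚ) * (j:ℚ)^m)
          * ((stirling1 n i : ℚ) * (-(j:ℚ))^i)
        = B * ((stirling1 n i:ℚ) * (-1:ℚ)^i) * Asum (n+q) (m+i) := by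
      rw [Asum, Finset.mul_sum]
      refine Finset.sum_congr rfl fun j _ => ?_
      rw [neg_pow (j:ℚ) i, pow_add]
      ring
    rw [hAs, hpow i (Finset.mem_range_succ_iff.mp hi), hst i, hB]
    ring
  rw [Finset.sum_congr rfl inner, Finset.sum_comm]
  have hinner2 : ∀ j ∈ range (n+q+1),
      (∑ i ∈ range (n+1),
          B * ((-1:ℚ)^j * (((n+q).choose j : ℕ):ℚ) * (j:ℚ)^m)
            * ((stirling1 n i : ℚ) * (-(j:ℚ))^i))
      = B * ((-1:ℚ)^j * (((n+q).choose j : ℕ):ℚ) * (j:ℚ)^m)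
          * ((-1:ℚ)^n * ∏ s ∈ range n, ((j:ℚ) - s)) := by
    intro j _
    rw [← Finset.mul_sum]
    congr 1
    rw [← Finset.sum_congr rfl (fun i (_ : i ∈ range (n+1)) => rfl), stirling1_poly n (-(j:ℚ))]
    have : ∀ s ∈ range n, (-(j:ℚ) + s) = (-1:ℚ) * ((j:ℚ) - s) := fun s _ => by ring
    rw [Finset.prod_congr rfl this, Finset.prod_mul_distrib, Finset.prod_const,
      Finset.card_range]
  rw [Finset.sum_congr rfl hinner2]
  -- split the range
  rw [← Finset.sum_range_add_sum_Ico _ (show n ≤ n+q+1 by omega)]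
  have hzero : ∑ j ∈ range n,
      B * ((-1:ℚ)^j * (((n+q).choose j : ℕ):ℚ) * (j:ℚ)^m)
        * ((-1:ℚ)^n * ∏ s ∈ range n, ((j:ℚ) - s)) = 0 := by
    refine Finset.sum_eq_zero fun j hj => ?_
    have : ∏ s ∈ range n, ((j:ℚ) - s) = 0 :=
      Finset.prod_eq_zero hj (by simp)
    rw [this]; ring
  rw [hzero, zero_add, Finset.sum_Ico_eq_sum_range]
  have hq1 : n+q+1-n = q+1 := by omega
  rw [hq1]
  refine Finset.sum_congr rfl fun r hr => ?_
  have hr' : r ≤ q := Finset.mem_range_succ_iff.mp hr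
  have hprodr := prodD n r
  have hsign : (-1:ℚ)^(m+n+q) * (-1:ℚ)^(n+q) * (-1:ℚ)^(n+r) * (-1:ℚ)^n = (-1:ℚ)^(m+r) := by
    rw [← pow_add, ← pow_add, ← pow_add,
      show m+n+q+(n+q)+(n+r)+n = (m+r) + 2*(2*n+q) by ring, pow_add, pow_mul]
    norm_num
  have hchoose : (q.factorial:ℚ) / ((n+q).factorial:ℚ) * (((n+q).choose (n+r) : ℕ):ℚ)
      * (((n+r).factorial:ℚ) / (r.factorial:ℚ)) = ((q.choose r : ℕ):ℚ) := by
    rw [Nat.cast_choose ℚ (show n+r ≤ n+q by omega), Nat.cast_choose ℚ hr',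
      show n+q-(n+r) = q-r by omega]
    have h1 : ((n+r).factorial:ℚ) ≠ 0 := Nat.cast_ne_zero.mpr (Nat.factorial_ne_zero _)
    have h2 : ((q-r).factorial:ℚ) ≠ 0 := Nat.cast_ne_zero.mpr (Nat.factorial_ne_zero _)
    have h3 : (r.factorial:ℚ) ≠ 0 := Nat.cast_ne_zero.mpr (Nat.factorial_ne_zero _)
    field_simp
  have hcast : ((n:ℚ) + r) = (((n+r : ℕ)):ℚ) := by push_cast; ring
  rw [hcast, hprodr, hB, ← hchoose, ← hsign]
  ring

/-- Closed formula for poly-Bernoulli polynomial values at nonnegative integers. -/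
theorem pbPoly_eq_sum (m n : ℕ) (k : ℤ) :
    pbPoly k n m =
      ∑ q ∈ range (m + 1), ∑ i ∈ range (n + 1),
        (-1 : ℚ) ^ (m + n + q - i) * (q.factorial : ℚ) * ((q : ℚ) + 1) ^ (-k) *
          (stirling1 n i : ℚ) * (stirling2 (m + i) (n + q) : ℚ) := by
  have hm : (m.factorial : ℚ) ≠ 0 := Nat.cast_ne_zero.mpr (Nat.factorial_ne_zero m)
  rw [pbPoly, pbEGF, coeff_mul_liEGF, Finset.mul_sum]
  refine Finset.sum_congr rfl fun q _ => ?_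
  rw [coeff_rescale_mul_pow]
  have step1 : (m.factorial : ℚ) * (((q:ℚ)+1)^(-k)
        * ∑ r ∈ range (q+1), (-1:ℚ)^r * (q.choose r) * (-(n:ℚ) - r)^m / m.factorial)
      = ((q:ℚ)+1)^(-k)
        * ∑ r ∈ range (q+1), (-1:ℚ)^(m+r) * (q.choose r : ℚ) * ((n:ℚ)+r)^m := by
    rw [Finset.mul_sum, Finset.mul_sum, Finset.mul_sum]
    refine Finset.sum_congr rfl fun r _ => ?_
    have h1 : (-(n:ℚ) - (r:ℚ))^m = (-1:ℚ)^m * ((n:ℚ)+r)^m := by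
      rw [show (-(n:ℚ)-(r:ℚ)) = -((n:ℚ)+r) by ring, neg_pow]
    rw [h1, pow_add]
    field_simp
  rw [step1, ← claimB m n q, Finset.mul_sum]
  refine Finset.sum_congr rfl fun i _ => ?_
  ring
end
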